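/- Precise update for edge removal in graphs with unique paths: Let e be a binary relation on V that is acyclic and has at most one e-path between any two nodes. Suppose e(s,t), and define e'(v₁,v₂) := e(v₁,v₂) ∧ ¬(v₁ = s ∧ v₂ = t). Then for all v₁, v₂: e'*(v₁,v₂) ↔ e*(v₁,v₂) ∧ ¬(e*(v₁,s) ∧ e*(t,v₂)). -/

import Mathlib

/-- `IsPath e u l v` : `l` is the list of intermediate-and-final vertices of an
`e`-path from `u` to `v` (empty list means `u = v`). -/
def IsPath {V : Type*} (e : V → V → Prop) : V → List V → V → Prop
  | u, [], v => u = v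
  | u, w :: l, v => e u w ∧ IsPath e w l v

lemma isPath_append {V : Type*} {e : V → V → Prop} :
    ∀ {p : List V} {u v w : V} {q : List V},
      IsPath e u p v → IsPath e v q w → IsPath e u (p ++ q) w
  | [], u, v, w, q, hp, hq => by cases hp; exact hq
  | a :: p, u, v, w, q, hp, hq => ⟨hp.1, isPath_append hp.2 hq⟩

lemma exists_isPath {V : Type*} {e : V → V → Prop} {u v : V}
    (h : Relation.ReflTransGen e u v) : ∃ l, IsPath e u l v := by
  induction h with
  | refl => exact ⟨[], rfl⟩
  | @tail b c _ hc ih =>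
      obtain ⟨l, hl⟩ := ih
      exact ⟨l ++ [c], isPath_append hl ⟨hc, rfl⟩⟩

lemma rtg_of_isPath {V : Type*} {e : V → V → Prop} :
    ∀ {l : List V} {u v : V}, IsPath e u l v → Relation.ReflTransGen e u v
  | [], u, v, h => by cases h; rfl
  | a :: l, u, v, h => Relation.ReflTransGen.head h.1 (rtg_of_isPath h.2)

lemma isPath_mono {V : Type*} {e e' : V → V → Prop} (h : ∀ a b, e' a b → e a b) :
    ∀ {l : List V} {u v : V}, IsPath e' u l v → IsPath e u l v
  | [], u, v, hp => hp
  | a :: l, u, v, hp => ⟨h _ _ hp.1, isPath_mono h hp.2⟩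

theorem stmt_16 {V : Type*} (e : V → V → Prop) (s t : V)
    (hacyc : ∀ a : V, ¬ Relation.TransGen e a a)
    (huniq : ∀ (u v : V) (p q : List V), IsPath e u p v → IsPath e u q v → p = q)
    (hst : e s t) :
    ∀ v₁ v₂ : V,
      Relation.ReflTransGen (fun a b => e a b ∧ ¬ (a = s ∧ b = t)) v₁ v₂ ↔
        (Relation.ReflTransGen e v₁ v₂ ∧
          ¬ (Relation.ReflTransGen e v₁ s ∧ Relation.ReflTransGen e t v₂)) := by
  set e' : V → V → Prop := fun a b => e a b ∧ ¬ (a = s ∧ b = t) with he'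
  -- helper: path in e' containing edge (s,t) is impossible
  have key : ∀ (q : List V) (u : V) (r : List V) (v : V),
      IsPath e u q s → IsPath e' u (q ++ t :: r) v → False := by
    intro q
    induction q with
    | nil =>
        intro u r v hq hp
        cases hq
        exact hp.1.2 ⟨rfl, rfl⟩
    | cons a q ih =>
        intro u r v hq hp
        exact ih a r v hq.2 hp.2
  -- decomposition lemma
  have decomp : ∀ (l : List V) (u v : V), IsPath e u l v →
      Relation.ReflTransGen e' u v ∨
        (Relation.ReflTransGen e u s ∧ Relation.ReflTransGen e t v) := by
    intro l
    induction l with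
    | nil => intro u v h; cases h; exact Or.inl .refl
    | cons w l ih =>
        intro u v h
        rcases ih w v h.2 with h' | ⟨hws, htv⟩
        · by_cases hc : u = s ∧ w = t
          · refine Or.inr ⟨?_, ?_⟩
            · rw [hc.1]
            · rw [← hc.2]
              exact (rtg_of_isPath h.2)
          · exact Or.inl (Relation.ReflTransGen.head ⟨h.1, hc⟩ h')
        · exact Or.inr ⟨Relation.ReflTransGen.head h.1 hws, htv⟩
  intro v₁ v₂
  constructor
  · intro h
    refine ⟨Relation.ReflTransGen.mono (fun a b (hab : e' a b) => hab.1) _ _ h, ?_⟩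
    rintro ⟨h1, h2⟩
    obtain ⟨p, hp⟩ := exists_isPath h
    obtain ⟨q, hq⟩ := exists_isPath h1
    obtain ⟨r, hr⟩ := exists_isPath h2
    have hfull : IsPath e v₁ (q ++ t :: r) v₂ :=
      isPath_append hq ⟨hst, hr⟩
    have := huniq v₁ v₂ p (q ++ t :: r) (isPath_mono (fun a b hab => hab.1) hp) hfull
    subst this
    exact key q v₁ r v₂ hq hp
  · rintro ⟨h1, h2⟩
    obtain ⟨l, hl⟩ := exists_isPath h1
    rcases decomp l v₁ v₂ hl with h | h
    · exact h
    · exact absurd h h2
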